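/- arXiv:2205.08877 — 4 statements merged into one kernel-verified Lean document; each statement's English description precedes it below -/
import Mathlib

section
/- Let E be a Hermitian positive definite matrix and W a Hermitian positive semidefinite matrix of the same size with λ_max(EW) ≤ δ, where δ is the unique root in (1,2) of x - x² - log(2-x) = 0. Then Tr(EW(I - EW)) ≤ log det(2I - EW). -/
open Matrix
open scoped ComplexOrder

private lemma schulz_scalar {δ r : ℝ} (hδ1 : 1 < δ) (hδ2 : δ < 2)
    (hroot : δ - δ ^ 2 - Real.log (2 - δ) = 0)
    (hr0 : 0 ≤ r) (hrδ : r ≤ δ) : r - r ^ 2 ≤ Real.log (2 - r) := by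
  set f : ℝ → ℝ := fun x => Real.log (2 - x) - x + x ^ 2 with hf
  have hderiv : ∀ x ∈ Set.Iio (2 : ℝ), HasDerivAt f ((-1) / (2 - x) - 1 + 2 * x) x := by
    intro x hx
    have h2x : (2 : ℝ) - x ≠ 0 := by simp only [Set.mem_Iio] at hx; nlinarith
    have h1 : HasDerivAt (fun y : ℝ => 2 - y) (-1) x := by
      simpa using (hasDerivAt_id x).const_sub 2
    have h2 : HasDerivAt (fun y : ℝ => Real.log (2 - y)) ((-1) / (2 - x)) x := h1.log h2x
    have h3 : HasDerivAt (fun y : ℝ => y ^ 2) (2 * x) x := by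
      simpa [mul_comm] using hasDerivAt_pow 2 x
    exact (h2.sub (hasDerivAt_id x)).add h3
  have hderiv' : ∀ x ∈ Set.Iio (2 : ℝ), deriv f x = (-1) / (2 - x) - 1 + 2 * x :=
    fun x hx => (hderiv x hx).deriv
  have hmono : ∀ a b : ℝ, b < 2 →
      (∀ x ∈ Set.Ioo a b, 0 ≤ (-1) / (2 - x) - 1 + 2 * x) → MonotoneOn f (Set.Icc a b) := by
    intro a b hb hsign
    apply monotoneOn_of_deriv_nonneg (convex_Icc a b)
    · intro x hx
      exact (hderiv x (lt_of_le_of_lt hx.2 hb)).continuousAt.continuousWithinAt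
    · intro x hx
      rw [interior_Icc] at hx
      exact (hderiv x (lt_trans hx.2 hb)).differentiableAt.differentiableWithinAt
    · intro x hx
      rw [interior_Icc] at hx
      rw [hderiv' x (lt_trans hx.2 hb)]
      exact hsign x hx
  have hanti : ∀ a b : ℝ, b < 2 →
      (∀ x ∈ Set.Ioo a b, (-1) / (2 - x) - 1 + 2 * x ≤ 0) → AntitoneOn f (Set.Icc a b) := by
    intro a b hb hsign
    apply antitoneOn_of_deriv_nonpos (convex_Icc a b)
    · intro x hx
      exact (hderiv x (lt_of_le_of_lt hx.2 hb)).continuousAt.continuousWithinAt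
    · intro x hx
      rw [interior_Icc] at hx
      exact (hderiv x (lt_trans hx.2 hb)).differentiableAt.differentiableWithinAt
    · intro x hx
      rw [interior_Icc] at hx
      rw [hderiv' x (lt_trans hx.2 hb)]
      exact hsign x hx
  have hf1 : f 1 = 0 := by norm_num [hf]
  have hfδ : f δ = 0 := by simp only [hf]; linarith
  have key : 0 ≤ f r := by
    rcases le_or_gt r 1 with h1 | h1
    · -- f antitone on [0,1]
      have ha : AntitoneOn f (Set.Icc 0 1) := by
        apply hanti 0 1 (by norm_num)
        intro x hx
        obtain ⟨hx0, hx1⟩ := hx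
        have h2x : (0:ℝ) < 2 - x := by linarith
        rw [div_sub' h2x.ne', div_add' _ _ _ h2x.ne', div_nonpos_iff]
        right
        constructor
        · nlinarith
        · linarith
      have := ha ⟨hr0, h1⟩ (Set.right_mem_Icc.mpr (by norm_num)) h1
      rw [hf1] at this
      linarith
    · rcases le_or_gt r (3/2) with h2 | h2
      · -- f monotone on [1, 3/2]
        have hm : MonotoneOn f (Set.Icc 1 (3/2)) := by
          apply hmono 1 (3/2) (by norm_num)
          intro x hx
          obtain ⟨hx1, hx2⟩ := hx
          have h2x : (0:ℝ) < 2 - x := by linarith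
          rw [div_sub' h2x.ne', div_add' _ _ _ h2x.ne', div_nonneg_iff]
          left
          constructor
          · nlinarith
          · linarith
        have := hm (Set.left_mem_Icc.mpr (by norm_num)) ⟨h1.le, h2⟩ h1.le
        rw [hf1] at this
        linarith
      · -- f antitone on [3/2, δ]
        have ha : AntitoneOn f (Set.Icc (3/2) δ) := by
          apply hanti (3/2) δ hδ2
          intro x hx
          obtain ⟨hx1, hx2⟩ := hx
          have h2x : (0:ℝ) < 2 - x := by linarith
          rw [div_sub' h2x.ne', div_add' _ _ _ h2x.ne', div_nonpos_iff]
          right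
          constructor
          · nlinarith
          · linarith
        have := ha ⟨h2.le, hrδ⟩ (Set.right_mem_Icc.mpr (by linarith)) hrδ
        rw [hfδ] at this
        linarith
  simp only [hf] at key
  linarith

/-- If E is Hermitian positive definite, W is Hermitian positive semidefinite, and
every eigenvalue of E*W is at most δ (the unique root of x - x² - log(2-x) = 0 in (1,2)),
then Tr(EW(I - EW)) ≤ log det(2I - EW). -/
theorem schulz_monotone_cost {n : ℕ} (E W : Matrix (Fin n) (Fin n) ℂ)
    (hE : E.PosDef) (hW : W.PosSemidef)
    (δ : ℝ) (hδ : δ ∈ Set.Ioo (1 : ℝ) 2)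
    (hroot : δ - δ ^ 2 - Real.log (2 - δ) = 0)
    (hspec : ∀ μ ∈ spectrum ℂ (E * W), ∃ r : ℝ, 0 ≤ r ∧ r ≤ δ ∧ μ = (r : ℂ)) :
    (E * W * (1 - E * W)).trace.re ≤
      Real.log (((2 : ℂ) • (1 : Matrix (Fin n) (Fin n) ℂ) - E * W).det.re) := by
  obtain ⟨hδ1, hδ2⟩ := hδ
  classical
  set S : Matrix (Fin n) (Fin n) ℂ := (open scoped MatrixOrder in CFC.sqrt E) with hSdef
  have hS : S.PosSemidef := (open scoped MatrixOrder in (CFC.sqrt_nonneg E).posSemidef)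
  have hSS : S * S = E := (open scoped MatrixOrder in CFC.sqrt_mul_sqrt_self E hE.posSemidef.nonneg)
  have hSH : Sᴴ = S := hS.1
  have hSu : IsUnit S := by
    rw [Matrix.isUnit_iff_isUnit_det]
    have hEdet : IsUnit E.det := hE.det_pos.ne'.isUnit
    rw [← hSS, Matrix.det_mul] at hEdet
    exact isUnit_of_mul_isUnit_left hEdet
  have hSdetu : IsUnit S.det := (Matrix.isUnit_iff_isUnit_det S).mp hSu
  have hS1 : S * S⁻¹ = 1 := Matrix.mul_nonsing_inv S hSdetu
  have hS2 : S⁻¹ * S = 1 := Matrix.nonsing_inv_mul S hSdetu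
  set A : Matrix (Fin n) (Fin n) ℂ := S * W * S with hAdef
  have hA : A.PosSemidef := by
    have := hW.mul_mul_conjTranspose_same S
    rwa [hSH] at this
  have hconj : S * A * S⁻¹ = E * W := by
    calc S * (S * W * S) * S⁻¹ = (S * S) * W * (S * S⁻¹) := by simp only [mul_assoc]
    _ = E * W := by rw [hS1, mul_one, hSS]
  -- spectrum equality
  have hspecA : spectrum ℂ A = spectrum ℂ (E * W) := by
    rw [← hconj, ← hSu.unit_spec, ← Matrix.coe_units_inv, spectrum.units_conjugate]
  -- eigenvalue bounds
  have hAH : A.IsHermitian := hA.1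
  have hev0 : ∀ i, 0 ≤ hAH.eigenvalues i := hA.eigenvalues_nonneg
  have hevδ : ∀ i, hAH.eigenvalues i ≤ δ := by
    intro i
    have hm : (hAH.eigenvalues i : ℂ) ∈ spectrum ℂ A := by
      have h1 := hAH.eigenvalues_mem_spectrum_real i
      simpa using spectrum.algebraMap_mem ℂ h1
    rw [hspecA] at hm
    obtain ⟨r, hr0, hrδ, hμ⟩ := hspec _ hm
    have : hAH.eigenvalues i = r := by exact_mod_cast hμ
    rw [this]; exact hrδ
  -- spectral theorem
  set V : Matrix (Fin n) (Fin n) ℂ := (hAH.eigenvectorUnitary : Matrix (Fin n) (Fin n) ℂ)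
    with hVdef
  set d : Fin n → ℂ := RCLike.ofReal ∘ hAH.eigenvalues with hddef
  have hVV : V * Vᴴ = 1 := by
    have := hAH.eigenvectorUnitary.2
    rw [Matrix.mem_unitaryGroup_iff] at this
    simpa [Matrix.star_eq_conjTranspose] using this
  have hVV' : Vᴴ * V = 1 := by
    have := hAH.eigenvectorUnitary.2
    rw [Matrix.mem_unitaryGroup_iff'] at this
    simpa [Matrix.star_eq_conjTranspose] using this
  have hspectral : A = V * diagonal d * Vᴴ := by
    exact hAH.spectral_theorem
  -- conjugation helpers
  have hmulS : ∀ B C : Matrix (Fin n) (Fin n) ℂ,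
      (S * B * S⁻¹) * (S * C * S⁻¹) = S * (B * C) * S⁻¹ := by
    intro B C
    calc (S * B * S⁻¹) * (S * C * S⁻¹) = S * (B * ((S⁻¹ * S) * (C * S⁻¹))) := by
          simp only [mul_assoc]
    _ = S * (B * C) * S⁻¹ := by rw [hS2, one_mul]; simp only [mul_assoc]
  have hmulV : ∀ B C : Matrix (Fin n) (Fin n) ℂ,
      (V * B * Vᴴ) * (V * C * Vᴴ) = V * (B * C) * Vᴴ := by
    intro B C
    calc (V * B * Vᴴ) * (V * C * Vᴴ) = V * (B * ((Vᴴ * V) * (C * Vᴴ))) := by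
          simp only [mul_assoc]
    _ = V * (B * C) * Vᴴ := by rw [hVV', one_mul]; simp only [mul_assoc]
  have htrace_V : ∀ X : Matrix (Fin n) (Fin n) ℂ, (V * X * Vᴴ).trace = X.trace := by
    intro X
    rw [Matrix.trace_mul_comm, ← mul_assoc, hVV', one_mul]
  have hdet_V : ∀ X : Matrix (Fin n) (Fin n) ℂ, (V * X * Vᴴ).det = X.det := by
    intro X
    rw [Matrix.det_mul, Matrix.det_mul, mul_right_comm, ← Matrix.det_mul, hVV,
      Matrix.det_one, one_mul]
  -- trace computation
  have htr : (E * W * (1 - E * W)).trace = ∑ i, ((hAH.eigenvalues i : ℂ) -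
      (hAH.eigenvalues i : ℂ) ^ 2) := by
    have h1 : E * W * (1 - E * W) = S * (A - A * A) * S⁻¹ := by
      rw [← hconj, mul_sub, mul_one, hmulS, mul_sub, sub_mul]
    have h2 : A - A * A = V * (diagonal d - diagonal d * diagonal d) * Vᴴ := by
      rw [hspectral, hmulV, mul_sub, sub_mul]
    rw [h1, Matrix.trace_conj hSu, h2, htrace_V, Matrix.diagonal_mul_diagonal,
      Matrix.diagonal_sub, Matrix.trace_diagonal]
    congr 1
    ext i
    simp [hddef, sq]
  -- det computation
  have hdet : ((2 : ℂ) • (1 : Matrix (Fin n) (Fin n) ℂ) - E * W).det =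
      ∏ i, ((2 : ℂ) - (hAH.eigenvalues i : ℂ)) := by
    have h1 : (2 : ℂ) • (1 : Matrix (Fin n) (Fin n) ℂ) - E * W =
        S * ((2 : ℂ) • 1 - A) * S⁻¹ := by
      rw [← hconj, mul_sub, sub_mul]
      congr 1
      rw [mul_smul_comm, smul_mul_assoc, mul_one, hS1]
    have h2 : (2 : ℂ) • (1 : Matrix (Fin n) (Fin n) ℂ) - A =
        V * ((2 : ℂ) • 1 - diagonal d) * Vᴴ := by
      rw [hspectral, mul_sub, sub_mul]
      congr 1
      rw [mul_smul_comm, smul_mul_assoc, mul_one, hVV]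
    rw [h1, Matrix.det_conj hSu, h2, hdet_V, Matrix.smul_one_eq_diagonal,
      Matrix.diagonal_sub, Matrix.det_diagonal]
    exact Finset.prod_congr rfl fun i _ => by simp [hddef]
  -- pass to real numbers
  have htr_re : (E * W * (1 - E * W)).trace.re =
      ∑ i, (hAH.eigenvalues i - hAH.eigenvalues i ^ 2) := by
    rw [htr]
    have : ∑ i, ((hAH.eigenvalues i : ℂ) - (hAH.eigenvalues i : ℂ) ^ 2) =
        ((∑ i, (hAH.eigenvalues i - hAH.eigenvalues i ^ 2) : ℝ) : ℂ) := by
      push_cast; ring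
    rw [this, Complex.ofReal_re]
  have hdet_re : ((2 : ℂ) • (1 : Matrix (Fin n) (Fin n) ℂ) - E * W).det.re =
      ∏ i, (2 - hAH.eigenvalues i) := by
    rw [hdet]
    have : ∏ i, ((2 : ℂ) - (hAH.eigenvalues i : ℂ)) =
        ((∏ i, (2 - hAH.eigenvalues i) : ℝ) : ℂ) := by
      push_cast; ring
    rw [this, Complex.ofReal_re]
  rw [htr_re, hdet_re]
  have hpos : ∀ i : Fin n, (0 : ℝ) < 2 - hAH.eigenvalues i := by
    intro i; have := hevδ i; linarith
  rw [Real.log_prod (fun i _ => (hpos i).ne')]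
  apply Finset.sum_le_sum
  intro i _
  exact schulz_scalar hδ1 hδ2 hroot (hev0 i) (hevδ i)
end

section
/- If W is Hermitian positive semidefinite, E is Hermitian positive definite, and λ_max(EW) ≤ 2, then the Schulz update W⁺ = W(2I - EW) = 2W - WEW is Hermitian positive semidefinite. -/
open Matrix
open scoped ComplexOrder Pointwise
open scoped MatrixOrder

/-- If W is Hermitian PSD, E is Hermitian positive definite, and λ_max(EW) ≤ 2,
then the Schulz update W⁺ = W(2I - EW) is Hermitian positive semidefinite. -/
theorem schulz_update_psd {n : ℕ} (E W : Matrix (Fin n) (Fin n) ℂ)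
    (hE : E.PosDef) (hW : W.PosSemidef)
    (hspec : ∀ μ ∈ spectrum ℂ (E * W), ∃ r : ℝ, 0 ≤ r ∧ r ≤ 2 ∧ μ = (r : ℂ)) :
    (W * ((2 : ℂ) • (1 : Matrix (Fin n) (Fin n) ℂ) - E * W)).PosSemidef := by
  classical
  set S := CFC.sqrt W with hSdef
  have hS : S.PosSemidef := (CFC.sqrt_nonneg W).posSemidef
  have hSS : S * S = W := CFC.sqrt_mul_sqrt_self W hW.nonneg
  have hSH : Sᴴ = S := hS.1
  set M := S * E * S with hMdef
  have hM : M.PosSemidef := by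
    have := hE.posSemidef.conjTranspose_mul_mul_same S
    rwa [hSH] at this
  have hNH : ((2 : ℂ) • (1 : Matrix (Fin n) (Fin n) ℂ) - M).IsHermitian := by
    refine IsHermitian.sub ?_ hM.1
    unfold Matrix.IsHermitian
    rw [conjTranspose_smul, conjTranspose_one]
    norm_num
  have key : ((2 : ℂ) • (1 : Matrix (Fin n) (Fin n) ℂ) - M).PosSemidef := by
    apply (IsHermitian.posSemidef_iff_eigenvalues_nonneg hNH).mpr
    intro i
    show (0 : ℝ) ≤ hNH.eigenvalues i
    have hmem : ((hNH.eigenvalues i : ℝ) : ℂ) ∈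
        spectrum ℂ ((2 : ℂ) • (1 : Matrix (Fin n) (Fin n) ℂ) - M) := by
      have h1 := hNH.eigenvalues_mem_spectrum_real i
      have : algebraMap ℝ ℂ (hNH.eigenvalues i) ∈
          spectrum ℂ ((2 : ℂ) • (1 : Matrix (Fin n) (Fin n) ℂ) - M) :=
        (spectrum.algebraMap_mem_iff ℂ).mpr h1
      simpa using this
    have hmem2 : ((hNH.eigenvalues i : ℝ) : ℂ) ∈ ({(2 : ℂ)} : Set ℂ) - spectrum ℂ M := by
      have h2 : algebraMap ℂ (Matrix (Fin n) (Fin n) ℂ) (2 : ℂ) - M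
          = (2 : ℂ) • (1 : Matrix (Fin n) (Fin n) ℂ) - M := by
        rw [Algebra.algebraMap_eq_smul_one]
      rw [spectrum.singleton_sub_eq, h2]
      exact hmem
    rw [Set.mem_sub] at hmem2
    obtain ⟨a, ha, μ, hμ, hxy⟩ := hmem2
    rw [Set.mem_singleton_iff] at ha
    subst ha
    by_cases hμ0 : μ = 0
    · subst hμ0
      have : ((hNH.eigenvalues i : ℝ) : ℂ) = 2 := by rw [← hxy]; ring
      have h2 : (hNH.eigenvalues i : ℝ) = 2 := by exact_mod_cast this
      rw [h2]; norm_num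
    · have hμmem : μ ∈ spectrum ℂ (E * W) := by
        have h1 : μ ∈ spectrum ℂ (S * (E * S)) \ {0} := by
          refine ⟨?_, hμ0⟩
          rwa [← mul_assoc]
        rw [spectrum.nonzero_mul_comm] at h1
        have h2 : (E * S) * S = E * W := by rw [mul_assoc, hSS]
        rw [h2] at h1
        exact h1.1
      obtain ⟨r, hr0, hr2, hμr⟩ := hspec μ hμmem
      have : ((hNH.eigenvalues i : ℝ) : ℂ) = ((2 - r : ℝ) : ℂ) := by
        rw [← hxy, hμr]; push_cast; ring
      have h2 : (hNH.eigenvalues i : ℝ) = 2 - r := by exact_mod_cast this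
      rw [h2]; linarith
  have hfinal := key.mul_mul_conjTranspose_same S
  rw [hSH] at hfinal
  have hEq : W * ((2 : ℂ) • (1 : Matrix (Fin n) (Fin n) ℂ) - E * W)
      = S * ((2 : ℂ) • (1 : Matrix (Fin n) (Fin n) ℂ) - M) * S := by
    rw [← hSS, hMdef]
    simp only [Matrix.mul_sub, Matrix.sub_mul, Matrix.mul_smul, Matrix.smul_mul,
      mul_one, one_mul, mul_assoc]
  rw [hEq]
  exact hfinal
end

section
/- Let H_k ∈ ℂ^{N×M} satisfy ‖H_k‖₂ ≤ √κ, let V₁,...,V_K ∈ ℂ^{M×d} satisfy Σ_m ‖V_m‖_F² ≤ P with Σ_m ‖V_m‖_F² = η > 0, and let U_k ∈ ℂ^{N×d}. Then the matrix E_k = (I - U_k^H H_k V_k)(I - U_k^H H_k V_k)^H + Σ_{m≠k} U_k^H H_k V_m V_m^H H_k^H U_k + (η σ²/P) U_k^H U_k satisfies λ_min(E_k) ≥ σ²/(Pκ + σ²). -/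
open Matrix Finset
open scoped ComplexOrder

noncomputable def nsq {p : ℕ} (v : Fin p → ℂ) : ℝ := ∑ i, Complex.normSq (v i)

lemma nsq_nonneg {p : ℕ} (v : Fin p → ℂ) : 0 ≤ nsq v :=
  Finset.sum_nonneg fun _ _ => Complex.normSq_nonneg _

lemma star_dot_self {p : ℕ} (v : Fin p → ℂ) : star v ⬝ᵥ v = (nsq v : ℂ) := by
  simp [dotProduct, nsq, Complex.normSq_eq_conj_mul_self, Pi.star_apply, Complex.ofReal_sum]

lemma qf_eq {p q : ℕ} (B : Matrix (Fin p) (Fin q) ℂ) (x : Fin p → ℂ) :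
    star x ⬝ᵥ (B * Bᴴ) *ᵥ x = (nsq (Bᴴ *ᵥ x) : ℂ) := by
  rw [← mulVec_mulVec, dotProduct_mulVec,
    show star x ᵥ* B = star (Bᴴ *ᵥ x) by rw [star_mulVec, conjTranspose_conjTranspose]]
  exact star_dot_self _

lemma nsq_eq_norm_sq {p : ℕ} (v : Fin p → ℂ) :
    nsq v = ‖(WithLp.equiv 2 (Fin p → ℂ)).symm v‖ ^ 2 := by
  rw [EuclideanSpace.norm_eq, Real.sq_sqrt (by positivity)]
  simp [nsq, Complex.sq_norm]

lemma cs {p : ℕ} (u v : Fin p → ℂ) : Complex.normSq (star u ⬝ᵥ v) ≤ nsq u * nsq v := by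
  have h := @norm_inner_le_norm ℂ (EuclideanSpace ℂ (Fin p)) _ _ _
    ((WithLp.equiv 2 _).symm u) ((WithLp.equiv 2 _).symm v)
  have he : (inner ℂ ((WithLp.equiv 2 (Fin p → ℂ)).symm u) ((WithLp.equiv 2 (Fin p → ℂ)).symm v) : ℂ)
      = star u ⬝ᵥ v := by
    simp [PiLp.inner_apply, dotProduct, RCLike.inner_apply, mul_comm]
  rw [he] at h
  rw [nsq_eq_norm_sq, nsq_eq_norm_sq]
  calc Complex.normSq (star u ⬝ᵥ v) = ‖star u ⬝ᵥ v‖ * ‖star u ⬝ᵥ v‖ := by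
        simp [Complex.normSq_eq_norm_sq, sq]
    _ ≤ _ := by nlinarith [norm_nonneg ((WithLp.equiv 2 (Fin p → ℂ)).symm u),
        norm_nonneg ((WithLp.equiv 2 (Fin p → ℂ)).symm v), norm_nonneg (star u ⬝ᵥ v)]

lemma triangle {p : ℕ} (x w : Fin p → ℂ) :
    (Real.sqrt (nsq x) - Real.sqrt (nsq w)) ^ 2 ≤ nsq (x - w) := by
  set a := (WithLp.equiv 2 (Fin p → ℂ)).symm x
  set b := (WithLp.equiv 2 (Fin p → ℂ)).symm w
  have hx : Real.sqrt (nsq x) = ‖a‖ := by rw [nsq_eq_norm_sq, Real.sqrt_sq (norm_nonneg _)]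
  have hw : Real.sqrt (nsq w) = ‖b‖ := by rw [nsq_eq_norm_sq, Real.sqrt_sq (norm_nonneg _)]
  have hxw : nsq (x - w) = ‖a - b‖ ^ 2 := nsq_eq_norm_sq _
  rw [hx, hw, hxw]
  have h := abs_norm_sub_norm_le a b
  nlinarith [abs_nonneg (‖a‖ - ‖b‖), sq_abs (‖a‖ - ‖b‖), norm_nonneg (a - b)]

-- column Cauchy-Schwarz
lemma colCS {a b : ℕ} (A : Matrix (Fin a) (Fin b) ℂ) (z : Fin a → ℂ) :
    nsq (Aᴴ *ᵥ z) ≤ (∑ j, ∑ i, Complex.normSq (A i j)) * nsq z := by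
  rw [nsq, Finset.sum_mul]
  refine Finset.sum_le_sum fun j _ => ?_
  have h1 : (Aᴴ *ᵥ z) j = star (fun i => A i j) ⬝ᵥ z := by
    simp [mulVec, dotProduct, conjTranspose_apply]
  rw [h1]
  have := cs (fun i => A i j) z
  have h2 : nsq (fun i => A i j) = ∑ i, Complex.normSq (A i j) := rfl
  rw [h2] at this; exact this

lemma dot_shift {p q : ℕ} (A : Matrix (Fin p) (Fin q) ℂ) (u : Fin p → ℂ) (y : Fin q → ℂ) :
    star u ⬝ᵥ (A *ᵥ y) = star (Aᴴ *ᵥ u) ⬝ᵥ y := by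
  rw [dotProduct_mulVec, star_mulVec, conjTranspose_conjTranspose]

lemma sum_mulVec' {p q : ℕ} {ι : Type*} (s : Finset ι) (A : ι → Matrix (Fin p) (Fin q) ℂ)
    (x : Fin q → ℂ) : (∑ m ∈ s, A m) *ᵥ x = ∑ m ∈ s, A m *ᵥ x :=
  map_sum (Matrix.mulVec.addMonoidHomLeft x) A s

lemma dot_sum {p : ℕ} {ι : Type*} (s : Finset ι) (v : Fin p → ℂ) (f : ι → Fin p → ℂ) :
    v ⬝ᵥ (∑ m ∈ s, f m) = ∑ m ∈ s, v ⬝ᵥ f m := by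
  simp only [dotProduct, Finset.sum_apply, Finset.mul_sum]
  rw [Finset.sum_comm]


/-- Lower bound on the minimum eigenvalue of the MSE matrix E_k:
if σ_max(H_kᴴH_k) ≤ κ and Σ_m ‖V_m‖_F² = η with 0 < η ≤ P, then
λ_min(E_k) ≥ σ²/(Pκ + σ²), expressed as E_k - (σ²/(Pκ+σ²)) I being PSD. -/
theorem Emat_min_eig_lower_bound {M N d K : ℕ}
    (H : Matrix (Fin N) (Fin M) ℂ) (V : Fin K → Matrix (Fin M) (Fin d) ℂ)
    (U : Matrix (Fin N) (Fin d) ℂ) (k : Fin K) (σ P κ η : ℝ)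
    (hσ : 0 < σ) (hP : 0 < P) (hκ : 0 < κ)
    (hH : ((κ : ℂ) • (1 : Matrix (Fin M) (Fin M) ℂ) - Hᴴ * H).PosSemidef)
    (hη : η = ∑ m, ((V m * (V m)ᴴ).trace).re) (hηpos : 0 < η) (hηP : η ≤ P) :
    ((1 - Uᴴ * H * V k) * (1 - Uᴴ * H * V k)ᴴ +
      (∑ m ∈ Finset.univ.erase k, Uᴴ * H * V m * (V m)ᴴ * Hᴴ * U) +
      ((η * σ ^ 2 / P : ℝ) : ℂ) • (Uᴴ * U) -
      ((σ ^ 2 / (P * κ + σ ^ 2) : ℝ) : ℂ) • (1 : Matrix (Fin d) (Fin d) ℂ)).PosSemidef := by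
  have hterm : ∀ m, Uᴴ * H * V m * (V m)ᴴ * Hᴴ * U
      = (Uᴴ * H * V m) * (Uᴴ * H * V m)ᴴ := by
    intro m; simp [conjTranspose_mul, Matrix.mul_assoc]
  refine posSemidef_iff_dotProduct_mulVec.mpr ⟨?_, ?_⟩
  · -- Hermitian
    apply Matrix.IsHermitian.sub
    · apply Matrix.IsHermitian.add
      apply Matrix.IsHermitian.add
      · exact isHermitian_mul_conjTranspose_self _
      · unfold Matrix.IsHermitian
        rw [conjTranspose_sum]
        refine Finset.sum_congr rfl fun m _ => ?_
        rw [hterm m]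
        exact isHermitian_mul_conjTranspose_self _
      · unfold Matrix.IsHermitian
        rw [conjTranspose_smul, (isHermitian_conjTranspose_mul_self U).eq]
        congr 1
        simp [Complex.star_def, Complex.conj_ofReal]
    · unfold Matrix.IsHermitian
      rw [conjTranspose_smul, conjTranspose_one]
      congr 1
      simp [Complex.star_def, Complex.conj_ofReal]
  · intro x
    have hAk : (1 - Uᴴ * H * V k)ᴴ *ᵥ x
        = x - (V k)ᴴ *ᵥ (Hᴴ *ᵥ (U *ᵥ x)) := by
      rw [conjTranspose_sub, conjTranspose_one, sub_mulVec, one_mulVec]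
      congr 1
      simp [conjTranspose_mul, Matrix.mul_assoc, ← mulVec_mulVec]
    have hCm : ∀ m, (Uᴴ * H * V m)ᴴ *ᵥ x = (V m)ᴴ *ᵥ (Hᴴ *ᵥ (U *ᵥ x)) := by
      intro m
      simp [conjTranspose_mul, Matrix.mul_assoc, ← mulVec_mulVec]
    set u : Fin N → ℂ := U *ᵥ x with hu
    set z : Fin M → ℂ := Hᴴ *ᵥ u with hz
    have key : star x ⬝ᵥ ((1 - Uᴴ * H * V k) * (1 - Uᴴ * H * V k)ᴴ +
        (∑ m ∈ Finset.univ.erase k, Uᴴ * H * V m * (V m)ᴴ * Hᴴ * U) +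
        ((η * σ ^ 2 / P : ℝ) : ℂ) • (Uᴴ * U) -
        ((σ ^ 2 / (P * κ + σ ^ 2) : ℝ) : ℂ) • (1 : Matrix (Fin d) (Fin d) ℂ)) *ᵥ x
        = ((nsq (x - (V k)ᴴ *ᵥ z) + (∑ m ∈ Finset.univ.erase k, nsq ((V m)ᴴ *ᵥ z))
            + (η * σ ^ 2 / P) * nsq u - (σ ^ 2 / (P * κ + σ ^ 2)) * nsq x : ℝ) : ℂ) := by
      rw [sub_mulVec, add_mulVec, add_mulVec, dotProduct_sub, dotProduct_add, dotProduct_add]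
      rw [qf_eq, hAk]
      rw [sum_mulVec', dot_sum]
      have h2 : ∀ m ∈ Finset.univ.erase k,
          star x ⬝ᵥ (Uᴴ * H * V m * (V m)ᴴ * Hᴴ * U) *ᵥ x = ((nsq ((V m)ᴴ *ᵥ z) : ℝ) : ℂ) := by
        intro m _
        rw [hterm m, qf_eq, hCm m]
      rw [Finset.sum_congr rfl h2]
      rw [smul_mulVec, dotProduct_smul, smul_mulVec, dotProduct_smul]
      have h3 : star x ⬝ᵥ (Uᴴ * U) *ᵥ x = ((nsq u : ℝ) : ℂ) := by
        have e : Uᴴ * U = Uᴴ * (Uᴴ)ᴴ := by rw [conjTranspose_conjTranspose]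
        rw [e, qf_eq, conjTranspose_conjTranspose]
      rw [h3, one_mulVec, star_dot_self]
      simp only [smul_eq_mul]
      push_cast
      ring
    rw [key, Complex.zero_le_real]
    -- the real inequality
    set n := Real.sqrt (nsq x) with hn
    set r := Real.sqrt (nsq ((V k)ᴴ *ᵥ z)) with hrr
    have hn2 : n ^ 2 = nsq x := Real.sq_sqrt (nsq_nonneg _)
    have hr2 : r ^ 2 = nsq ((V k)ᴴ *ᵥ z) := Real.sq_sqrt (nsq_nonneg _)
    have htri : (n - r) ^ 2 ≤ nsq (x - (V k)ᴴ *ᵥ z) := by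
      rw [hn, hrr]; exact triangle x _
    have hS : 0 ≤ ∑ m ∈ Finset.univ.erase k, nsq ((V m)ᴴ *ᵥ z) :=
      Finset.sum_nonneg fun m _ => nsq_nonneg _
    have hHy : ∀ y : Fin M → ℂ, nsq (H *ᵥ y) ≤ κ * nsq y := by
      intro y
      have h0 := hH.dotProduct_mulVec_nonneg y
      rw [sub_mulVec, dotProduct_sub, smul_mulVec, one_mulVec, dotProduct_smul,
        star_dot_self] at h0
      have h1 : star y ⬝ᵥ (Hᴴ * H) *ᵥ y = ((nsq (H *ᵥ y) : ℝ) : ℂ) := by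
        have e : Hᴴ * H = Hᴴ * (Hᴴ)ᴴ := by rw [conjTranspose_conjTranspose]
        rw [e, qf_eq, conjTranspose_conjTranspose]
      rw [h1, smul_eq_mul, ← Complex.ofReal_mul, ← Complex.ofReal_sub,
        Complex.zero_le_real] at h0
      linarith
    have hzs : nsq z ≤ κ * nsq u := by
      have hcs := cs u (H *ᵥ z)
      have heq : star u ⬝ᵥ (H *ᵥ z) = ((nsq z : ℝ) : ℂ) := by
        rw [dot_shift, ← hz, star_dot_self]
      rw [heq, Complex.normSq_ofReal] at hcs
      have h5 := hHy z
      rcases eq_or_lt_of_le (nsq_nonneg z) with h6 | h6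
      · rw [← h6]; exact mul_nonneg hκ.le (nsq_nonneg u)
      · nlinarith [nsq_nonneg u, nsq_nonneg (H *ᵥ z),
          mul_le_mul_of_nonneg_left h5 (nsq_nonneg u)]
    have hsum : ∑ m, nsq ((V m)ᴴ *ᵥ z) ≤ η * nsq z := by
      rw [hη]
      have h7 : ∀ m : Fin K, nsq ((V m)ᴴ *ᵥ z) ≤ ((V m * (V m)ᴴ).trace).re * nsq z := by
        intro m
        have h8 := colCS (V m) z
        have h9 : ((V m * (V m)ᴴ).trace).re = ∑ j, ∑ i, Complex.normSq (V m i j) := by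
          simp only [Matrix.trace, Matrix.diag_apply, Matrix.mul_apply,
            conjTranspose_apply, RCLike.star_def, Complex.mul_conj]
          rw [Complex.re_sum]
          simp only [Complex.re_sum, Complex.ofReal_re]
          rw [Finset.sum_comm]
        rw [h9]; exact h8
      calc ∑ m, nsq ((V m)ᴴ *ᵥ z) ≤ ∑ m, ((V m * (V m)ᴴ).trace).re * nsq z :=
            Finset.sum_le_sum fun m _ => h7 m
        _ = (∑ m, ((V m * (V m)ᴴ).trace).re) * nsq z := by rw [Finset.sum_mul]
    have hrk : r ^ 2 ≤ η * (κ * nsq u) := by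
      rw [hr2]
      have h10 : nsq ((V k)ᴴ *ᵥ z) ≤ ∑ m, nsq ((V m)ᴴ *ᵥ z) :=
        Finset.single_le_sum (fun m _ => nsq_nonneg ((V m)ᴴ *ᵥ z)) (Finset.mem_univ k)
      calc nsq ((V k)ᴴ *ᵥ z) ≤ η * nsq z := le_trans h10 hsum
        _ ≤ η * (κ * nsq u) := mul_le_mul_of_nonneg_left hzs hηpos.le
    -- final arithmetic
    set β := σ ^ 2 / (P * κ) with hβdef
    have hβ : β * (P * κ) = σ ^ 2 := div_mul_cancel₀ _ (by positivity)
    have hβpos : 0 < β := by positivity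
    have h11 : β * r ^ 2 ≤ (η * σ ^ 2 / P) * nsq u := by
      rw [hβdef, div_mul_eq_mul_div, div_le_iff₀ (by positivity : (0:ℝ) < P * κ)]
      have e : η * σ ^ 2 / P * nsq u * (P * κ) = σ ^ 2 * (η * (κ * nsq u)) := by
        field_simp
      rw [e]
      exact mul_le_mul_of_nonneg_left hrk (sq_nonneg σ)
    have h12 : σ ^ 2 / (P * κ + σ ^ 2) * n ^ 2 ≤ (n - r) ^ 2 + β * r ^ 2 := by
      rw [div_mul_eq_mul_div, div_le_iff₀ (by positivity : (0:ℝ) < P * κ + σ ^ 2)]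
      have hσ2 : σ ^ 2 = β * (P * κ) := hβ.symm
      have hid : ((n - r) ^ 2 + β * r ^ 2) * (P * κ + σ ^ 2) * (P * κ)
          - σ ^ 2 * n ^ 2 * (P * κ) = ((P * κ) * ((1 + β) * r - n)) ^ 2 := by
        rw [hσ2]; ring
      nlinarith [hid, sq_nonneg ((P * κ) * ((1 + β) * r - n)), mul_pos hP hκ]
    rw [hn2] at h12
    linarith [htri, hS, h11, h12]
end

section
/- Let A be an m×n complex matrix with ‖A‖₂ ≤ √κ and x, b vectors with ‖x‖ = 1. Then ‖x - A^H b‖² + c‖b‖² ≥ c/(c + κ) for any c > 0, where the minimum over ‖b‖ of the lower bound (1 - √κ‖b‖)₊² + c‖b‖² equals c/(c+κ). -/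
open Matrix Finset
open scoped ComplexOrder

lemma my_star_dot {k : ℕ} (w : Fin k → ℂ) : (star w ⬝ᵥ w) = ((∑ i, ‖w i‖^2 : ℝ) : ℂ) := by
  push_cast
  simp [dotProduct, Complex.mul_conj', mul_comm]

lemma my_cs {k : ℕ} (u w : Fin k → ℂ) :
    ‖star u ⬝ᵥ w‖ ≤ Real.sqrt (∑ i, ‖u i‖^2) * Real.sqrt (∑ i, ‖w i‖^2) := by
  have h := norm_inner_le_norm (𝕜 := ℂ) (E := EuclideanSpace ℂ (Fin k)) (WithLp.toLp 2 u) (WithLp.toLp 2 w)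
  rw [EuclideanSpace.inner_eq_star_dotProduct, dotProduct_comm] at h
  simpa [EuclideanSpace.norm_eq] using h

lemma my_tri {k : ℕ} (x v : Fin k → ℂ) :
    Real.sqrt (∑ i, ‖x i‖^2) - Real.sqrt (∑ i, ‖v i‖^2)
      ≤ Real.sqrt (∑ i, ‖(x - v) i‖^2) := by
  have h := norm_sub_norm_le (E := EuclideanSpace ℂ (Fin k)) (WithLp.toLp 2 x) (WithLp.toLp 2 v)
  simpa [EuclideanSpace.norm_eq] using h

lemma my_key {m n : ℕ} (A : Matrix (Fin m) (Fin n) ℂ) (κ : ℝ)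
    (hA : ((κ : ℂ) • (1 : Matrix (Fin n) (Fin n) ℂ) - Aᴴ * A).PosSemidef)
    (v : Fin n → ℂ) : ∑ i, ‖(A *ᵥ v) i‖^2 ≤ κ * ∑ i, ‖v i‖^2 := by
  have h := hA.dotProduct_mulVec_nonneg v
  rw [sub_mulVec, smul_mulVec, one_mulVec, dotProduct_sub, dotProduct_smul,
    ← mulVec_mulVec, dotProduct_mulVec, ← star_mulVec, my_star_dot, my_star_dot] at h
  rw [Complex.le_def] at h
  have h1 := h.1
  simp only [smul_eq_mul, ← Complex.ofReal_mul, ← Complex.ofReal_sub,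
    Complex.ofReal_re, Complex.zero_re] at h1
  linarith

lemma my_scalar (κ c : ℝ) (hκ : 0 < κ) (hc : 0 < c) (t : ℝ) :
    c / (c + κ) ≤ (max (1 - Real.sqrt κ * t) 0) ^ 2 + c * t ^ 2 := by
  have hs : Real.sqrt κ ^ 2 = κ := Real.sq_sqrt hκ.le
  have hst : (Real.sqrt κ * t)^2 = κ * t^2 := by rw [mul_pow, hs]
  have hs0 : 0 ≤ Real.sqrt κ := Real.sqrt_nonneg κ
  have hck : 0 < c + κ := by linarith
  rw [div_le_iff₀ hck]
  rcases le_or_gt (1 - Real.sqrt κ * t) 0 with h | h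
  · rw [max_eq_right h]
    have h2 : 1 ≤ κ * t^2 := by nlinarith [sq_nonneg (Real.sqrt κ * t - 1)]
    nlinarith [mul_le_mul_of_nonneg_left h2 (mul_pos hc hck).le]
  · rw [max_eq_left h.le]
    have key2 : (((1 - Real.sqrt κ * t)^2 + c*t^2) * (c+κ) - c) * κ
        = (κ - (c+κ)*(Real.sqrt κ*t))^2 := by
      linear_combination (-(c+κ)*c) * hst
    nlinarith [sq_nonneg (κ - (c + κ) * (Real.sqrt κ * t)), key2]

set_option maxHeartbeats 1000000 in
/-- Core estimate: if ‖A‖₂ ≤ √κ (i.e. κI - AᴴA ⪰ 0), x is a unit vector and b arbitrary,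
then ‖x - Aᴴb‖² + c‖b‖² ≥ c/(c+κ); moreover the minimum over t = ‖b‖ ≥ 0 of the lower
bound (max(1 - √κ t, 0))² + c t² is exactly c/(c+κ). -/
theorem core_quadratic_estimate {m n : ℕ} (A : Matrix (Fin m) (Fin n) ℂ)
    (κ c : ℝ) (hκ : 0 < κ) (hc : 0 < c)
    (hA : ((κ : ℂ) • (1 : Matrix (Fin n) (Fin n) ℂ) - Aᴴ * A).PosSemidef) :
    (∀ (x : Fin n → ℂ) (b : Fin m → ℂ), (∑ i, ‖x i‖ ^ 2) = 1 →
      c / (c + κ) ≤ (∑ i, ‖(x - Aᴴ.mulVec b) i‖ ^ 2) + c * ∑ i, ‖b i‖ ^ 2) ∧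
    IsLeast {y : ℝ | ∃ t : ℝ, 0 ≤ t ∧
      y = (max (1 - Real.sqrt κ * t) 0) ^ 2 + c * t ^ 2} (c / (c + κ)) := by
  have hck : 0 < c + κ := by linarith
  have hs : Real.sqrt κ ^ 2 = κ := Real.sq_sqrt hκ.le
  constructor
  · intro x b hx
    set v : Fin n → ℂ := Aᴴ *ᵥ b with hv
    set N := ∑ i, ‖v i‖^2 with hN
    set Nb := ∑ i, ‖b i‖^2 with hNb
    have hN0 : 0 ≤ N := Finset.sum_nonneg fun i _ => sq_nonneg _
    have hNb0 : 0 ≤ Nb := Finset.sum_nonneg fun i _ => sq_nonneg _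
    -- key: N ≤ κ * Nb
    have h1 : star v ⬝ᵥ v = star (A *ᵥ v) ⬝ᵥ b := by
      conv_lhs => rw [hv]
      rw [show star v ⬝ᵥ (Aᴴ *ᵥ b) = (star v ᵥ* Aᴴ) ⬝ᵥ b from dotProduct_mulVec _ _ _,
        ← star_mulVec]
    have hnorm : ‖star v ⬝ᵥ v‖ = N := by
      rw [my_star_dot, Complex.norm_real, Real.norm_of_nonneg hN0]
    have step : N ≤ Real.sqrt (κ * N) * Real.sqrt Nb := by
      calc N = ‖star (A *ᵥ v) ⬝ᵥ b‖ := by rw [← h1, hnorm]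
        _ ≤ Real.sqrt (∑ i, ‖(A *ᵥ v) i‖^2) * Real.sqrt Nb := my_cs _ _
        _ ≤ Real.sqrt (κ * N) * Real.sqrt Nb :=
            mul_le_mul_of_nonneg_right (Real.sqrt_le_sqrt (my_key A κ hA v))
              (Real.sqrt_nonneg _)
    have hNκ : N ≤ κ * Nb := by
      rcases eq_or_lt_of_le hN0 with h0 | h0
      · rw [← h0]; exact mul_nonneg hκ.le hNb0
      · have hsq : N^2 ≤ κ * N * Nb := by
          have h2 := pow_le_pow_left₀ hN0 step 2
          rw [mul_pow, Real.sq_sqrt (mul_nonneg hκ.le hN0), Real.sq_sqrt hNb0] at h2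
          nlinarith [h2]
        nlinarith
    -- triangle inequality
    have htri := my_tri x v
    rw [hx, Real.sqrt_one] at htri
    have hvb : Real.sqrt N ≤ Real.sqrt κ * Real.sqrt Nb := by
      rw [← Real.sqrt_mul hκ.le]
      exact Real.sqrt_le_sqrt hNκ
    set T := Real.sqrt (∑ i, ‖(x - v) i‖^2) with hT
    have hT0 : 0 ≤ T := Real.sqrt_nonneg _
    have hTsq : T^2 = ∑ i, ‖(x - v) i‖^2 := Real.sq_sqrt (Finset.sum_nonneg fun i _ => sq_nonneg _)
    have hmax : max (1 - Real.sqrt κ * Real.sqrt Nb) 0 ≤ T := by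
      rw [max_le_iff]
      constructor
      · linarith
      · exact hT0
    have hmaxsq : (max (1 - Real.sqrt κ * Real.sqrt Nb) 0)^2 ≤ T^2 :=
      pow_le_pow_left₀ (le_max_right _ _) hmax 2
    have hbt : c * Nb = c * (Real.sqrt Nb)^2 := by rw [Real.sq_sqrt hNb0]
    calc c / (c + κ)
        ≤ (max (1 - Real.sqrt κ * Real.sqrt Nb) 0)^2 + c * (Real.sqrt Nb)^2 :=
          my_scalar κ c hκ hc _
      _ ≤ T^2 + c * Nb := by rw [hbt]; linarith
      _ = (∑ i, ‖(x - v) i‖^2) + c * Nb := by rw [hTsq]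
  · constructor
    · refine ⟨Real.sqrt κ / (c + κ), by positivity, ?_⟩
      have h1 : 1 - Real.sqrt κ * (Real.sqrt κ / (c + κ)) = c / (c + κ) := by
        rw [mul_div_assoc', ← Real.sqrt_mul_self hκ.le]
        field_simp
        rw [Real.sqrt_sq hκ.le, hs]; ring
      rw [h1, max_eq_left (by positivity)]
      field_simp
      nlinarith [hs]
    · rintro y ⟨t, ht, rfl⟩
      exact my_scalar κ c hκ hc t
end
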